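/- Let R be an associative ring with unity, M a left R-module, and P a submodule of M that is not small in M, i.e., there exists a proper submodule Q of M with P + Q = M. Then P is strongly hollow in M if and only if P is a hollow submodule of M (i.e., whenever K and L are submodules of M contained in P with K + L = P, then K = P or L = P) and P is weakly distributive in M (i.e., P = (P ∩ X) + (P ∩ Y) for all submodules X, Y of M with X + Y = M). -/
import Mathlib


/-- Let `P` be a submodule of `M` which is not small in `M`.  Then `P` is strongly
hollow in `M` iff `P` is a hollow submodule of `M` and `P` is weakly distributive
in `M`. -/
theorem stronglyHollow_iff_hollow_and_weaklyDistributive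
    {R : Type*} [Ring R] {M : Type*} [AddCommGroup M] [Module R M]
    (P : Submodule R M)
    (hnotsmall : ∃ Q : Submodule R M, Q ≠ ⊤ ∧ P ⊔ Q = ⊤) :
    (∀ K L : Submodule R M, P ≤ K ⊔ L → P ≤ K ∨ P ≤ L) ↔
      ((∀ K L : Submodule R M, K ≤ P → L ≤ P → K ⊔ L = P → K = P ∨ L = P) ∧
       (∀ X Y : Submodule R M, X ⊔ Y = ⊤ → P = (P ⊓ X) ⊔ (P ⊓ Y))) := by
  constructor
  · intro hsh
    constructor
    · intro K L hK hL hKL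
      rcases hsh K L hKL.ge with h | h
      · exact Or.inl (le_antisymm hK h)
      · exact Or.inr (le_antisymm hL h)
    · intro X Y hXY
      rcases hsh X Y (hXY ▸ le_top) with h | h
      · rw [inf_eq_left.mpr h]
        exact (sup_eq_left.mpr inf_le_left).symm
      · rw [inf_eq_left.mpr h]
        exact (sup_eq_right.mpr inf_le_left).symm
  · rintro ⟨hhol, hwd⟩ K L hP
    obtain ⟨Q, hQ, hPQ⟩ := hnotsmall
    have key : ∀ A : Submodule R M, P ≤ A ⊔ Q → P ≤ A := by
      intro A hA
      have hAQ : A ⊔ Q = ⊤ := by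
        rw [eq_top_iff, ← hPQ]
        exact sup_le hA le_sup_right
      rcases hhol (P ⊓ A) (P ⊓ Q) inf_le_left inf_le_left (hwd A Q hAQ).symm with h | h
      · exact inf_eq_left.mp h
      · exact absurd (by rw [eq_top_iff, ← hPQ]; exact sup_le (inf_eq_left.mp h) le_rfl)
          hQ
    have h1 : (K ⊔ Q) ⊔ (L ⊔ Q) = ⊤ := by
      rw [eq_top_iff, ← hPQ]
      exact sup_le (hP.trans (sup_le (le_sup_left.trans le_sup_left)
        (le_sup_left.trans le_sup_right))) (le_sup_right.trans le_sup_left)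
    rcases hhol (P ⊓ (K ⊔ Q)) (P ⊓ (L ⊔ Q)) inf_le_left inf_le_left
        (hwd (K ⊔ Q) (L ⊔ Q) h1).symm with h | h
    · exact Or.inl (key K (inf_eq_left.mp h))
    · exact Or.inr (key L (inf_eq_left.mp h))
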